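/- In the piecewise-linear setting of the previous statement (f^S composed of affine maps x ↦ μb + A_{S_i}x, μ ≠ 0, ϱᵀb ≠ 0): if det(P_S) ≠ 0 and I−M_S is singular, then f^S has no fixed point. -/

import Mathlib

open Matrix

/-- `M_S = A_{S_{n−1}} ⋯ A_{S_1} A_{S_0}`. -/
def wordProd {N n : ℕ} (A : Bool → Matrix (Fin N) (Fin N) ℝ)
    (S : Fin n → Bool) : Matrix (Fin N) (Fin N) ℝ :=
  ((List.ofFn fun i => A (S i)).reverse).prod

/-- `P_S = I + A_{S_{n−1}} + A_{S_{n−1}}A_{S_{n−2}} + ⋯ + A_{S_{n−1}}⋯A_{S_1}`. -/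
def wordP {N n : ℕ} (A : Bool → Matrix (Fin N) (Fin N) ℝ)
    (S : Fin n → Bool) : Matrix (Fin N) (Fin N) ℝ :=
  ∑ k ∈ Finset.range n, (((List.ofFn fun i => A (S i)).reverse).take k).prod

/-- `f^S = f^{S_{n−1}} ∘ ⋯ ∘ f^{S_0}` where `f^{S_i}(x) = μ b + A_{S_i} x`. -/
def affIter {N n : ℕ} (A : Bool → Matrix (Fin N) (Fin N) ℝ)
    (b : Fin N → ℝ) (μ : ℝ) (S : Fin n → Bool) (x : Fin N → ℝ) : Fin N → ℝ :=
  Fin.foldl n (fun y i => μ • b + (A (S i)).mulVec y) x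

private lemma row_mul_aux {N : ℕ} (X Y : Matrix (Fin N) (Fin N) ℝ) (i : Fin N) :
    (X * Y) i = X i ᵥ* Y := by
  funext j; simp [Matrix.mul_apply, Matrix.vecMul, dotProduct]

/-- Row 0 of the adjugate only depends on the columns other than column 0. -/
private lemma adjRow0_congr {N : ℕ} [NeZero N] (X Y : Matrix (Fin N) (Fin N) ℝ)
    (h : ∀ i j, j ≠ (0 : Fin N) → X i j = Y i j) :
    X.adjugate 0 = Y.adjugate 0 := by
  have key : ∀ Z : Matrix (Fin N) (Fin N) ℝ, ∀ j : Fin N,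
      (Z.updateRow j (Pi.single (0 : Fin N) 1)).det =
      ((Z.updateRow j (Pi.single (0 : Fin N) 1)).updateCol 0
        (Pi.single j 1)).det := by
    intro Z j
    set M0 := Z.updateRow j (Pi.single (0 : Fin N) 1) with hM0
    have hc : (fun i => M0 i 0) =
        Pi.single j 1 + (fun i => if i = j then 0 else Z i 0) := by
      funext i
      by_cases hi : i = j <;>
        simp [M0, hi, Matrix.updateRow_apply, Pi.single_apply]
    have hzero : (M0.updateCol 0 (fun i => if i = j then 0 else Z i 0)).det = 0 := by
      apply Matrix.det_eq_zero_of_row_eq_zero j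
      intro k
      by_cases hk : k = 0 <;>
        simp [Matrix.updateCol_apply, hk, M0, Matrix.updateRow_apply,
          Pi.single_apply]
    calc M0.det = (M0.updateCol 0 (fun i => M0 i 0)).det := by
          rw [Matrix.updateCol_eq_self]
      _ = (M0.updateCol 0 (Pi.single j 1)).det +
          (M0.updateCol 0 (fun i => if i = j then 0 else Z i 0)).det := by
          rw [hc, Matrix.det_updateCol_add]
      _ = (M0.updateCol 0 (Pi.single j 1)).det := by rw [hzero, add_zero]
  funext j
  rw [Matrix.adjugate_apply, Matrix.adjugate_apply, key X j, key Y j]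
  congr 1
  ext i k
  by_cases hk : k = (0 : Fin N)
  · simp [Matrix.updateCol_apply, hk]
  · by_cases hi : i = j
    · simp [Matrix.updateCol_apply, Matrix.updateRow_apply, hk, hi]
    · simp [Matrix.updateCol_apply, Matrix.updateRow_apply, hk, hi, h i k hk]

/-- Telescoping: off column 0, `1 − ∏ l = (∑ partial products) * (1 − AL)`. -/
private lemma telescope_aux {N : ℕ} [NeZero N] (AL : Matrix (Fin N) (Fin N) ℝ)
    (l : List (Matrix (Fin N) (Fin N) ℝ))
    (hmem : ∀ B ∈ l, ∀ i j, j ≠ (0 : Fin N) → B i j = AL i j) :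
    ∀ i j, j ≠ (0 : Fin N) →
      (1 - l.prod) i j =
      ((∑ k ∈ Finset.range l.length, (l.take k).prod) * (1 - AL)) i j := by
  induction l with
  | nil => intro i j hj; simp
  | cons B t ih =>
    intro i j hj
    have hB := hmem B (List.mem_cons_self) i j hj
    have ht := ih (fun C hC => hmem C (List.mem_cons_of_mem _ hC))
    set P := ∑ k ∈ Finset.range t.length, (t.take k).prod with hPdef
    have hPsum : (∑ k ∈ Finset.range (B :: t).length, ((B :: t).take k).prod)
        = 1 + B * P := by
      rw [List.length_cons, Finset.sum_range_succ']
      simp only [List.take_succ_cons, List.prod_cons, List.take_zero,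
        List.prod_nil]
      rw [← Finset.mul_sum, add_comm, hPdef]
    rw [hPsum, List.prod_cons]
    have hrw : (1 + B * P) * (1 - AL) = (1 - AL) + B * (P * (1 - AL)) := by
      noncomm_ring
    rw [hrw, Matrix.add_apply]
    have hmid : (B * (P * (1 - AL))) i j = (B * (1 - t.prod)) i j := by
      rw [Matrix.mul_apply, Matrix.mul_apply]
      refine Finset.sum_congr rfl fun k _ => ?_
      rw [ht k j hj]
    rw [hmid]
    have h2 : (B * (1 - t.prod)) i j = B i j - (B * t.prod) i j := by
      rw [mul_sub, mul_one, Matrix.sub_apply]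
    rw [h2, hB]
    simp [Matrix.sub_apply, Matrix.one_apply]

private lemma affIter_eq {N : ℕ} (A : Bool → Matrix (Fin N) (Fin N) ℝ)
    (b : Fin N → ℝ) (μ : ℝ) :
    ∀ (n : ℕ) (S : Fin n → Bool) (x : Fin N → ℝ),
    affIter A b μ S x = μ • ((wordP A S) *ᵥ b) + (wordProd A S) *ᵥ x := by
  intro n
  induction n with
  | zero =>
    intro S x
    simp [affIter, wordP, wordProd]
  | succ m ih =>
    intro S x
    have hrev : (List.ofFn fun i : Fin (m + 1) => A (S i)).reverse
        = A (S (Fin.last m)) ::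
          (List.ofFn fun i : Fin m => A (S i.castSucc)).reverse := by
      rw [List.ofFn_succ' (fun i : Fin (m + 1) => A (S i))]
      rw [List.concat_eq_append, List.reverse_append]
      simp
    have hM : wordProd A S
        = A (S (Fin.last m)) * wordProd A (fun i => S i.castSucc) := by
      rw [wordProd, hrev, List.prod_cons, wordProd]
    have hPid : wordP A S
        = 1 + A (S (Fin.last m)) * wordP A (fun i => S i.castSucc) := by
      rw [wordP, hrev, Finset.sum_range_succ']
      simp only [List.take_succ_cons, List.prod_cons, List.take_zero,
        List.prod_nil]
      rw [← Finset.mul_sum, add_comm, wordP]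
    have hfold : affIter A b μ S x
        = μ • b + (A (S (Fin.last m))) *ᵥ
            (affIter A b μ (fun i => S i.castSucc) x) := by
      rw [affIter, Fin.foldl_succ_last]
      rfl
    rw [hfold, ih, hM, hPid]
    rw [Matrix.add_mulVec, Matrix.one_mulVec, Matrix.mulVec_add,
      Matrix.mulVec_smul, smul_add, Matrix.mulVec_mulVec,
      Matrix.mulVec_mulVec, ← add_assoc]

/-- In the piecewise-linear setting (`μ ≠ 0`, `ϱᵀb ≠ 0`), if
`det P_S ≠ 0` and `I − M_S` is singular, then `f^S` has no fixed point. -/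
theorem no_fixed_point_of_singular {N n : ℕ} [NeZero N] [NeZero n]
    (AL AR : Matrix (Fin N) (Fin N) ℝ)
    (hcol : ∀ j : Fin N, j ≠ 0 → ∀ i : Fin N, AL i j = AR i j)
    (b : Fin N → ℝ) (μ : ℝ) (hμ : μ ≠ 0)
    (hrhob : ((Matrix.adjugate (1 - AL)) 0) ⬝ᵥ b ≠ 0)
    (S : Fin n → Bool) (A : Bool → Matrix (Fin N) (Fin N) ℝ)
    (hA : A = fun s => if s then AL else AR)
    (hP : (wordP A S).det ≠ 0)
    (hM : (1 - wordProd A S).det = 0) :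
    ∀ x : Fin N → ℝ, affIter A b μ S x ≠ x := by
  intro x hx
  set M := wordProd A S with hMdef
  set P := wordP A S with hPdef
  -- fixed point equation
  have hfe : (1 - M) *ᵥ x = μ • (P *ᵥ b) := by
    have h1 := affIter_eq A b μ n S x
    rw [hx] at h1
    rw [Matrix.sub_mulVec, Matrix.one_mulVec, sub_eq_iff_eq_add]
    rw [← hMdef, ← hPdef] at h1
    linear_combination (norm := module) h1
  -- the list of matrices
  set l := (List.ofFn fun i => A (S i)).reverse with hldef
  have hlen : l.length = n := by simp [hldef]
  have hmem : ∀ B ∈ l, ∀ i j, j ≠ (0 : Fin N) → B i j = AL i j := by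
    intro B hB i j hj
    rw [hldef, List.mem_reverse, List.mem_ofFn] at hB
    obtain ⟨k, hk⟩ := hB
    rw [← hk, hA]
    by_cases hSk : S k = true <;> simp [hSk, hcol j hj i]
  have hcols : ∀ i j, j ≠ (0 : Fin N) → (1 - M) i j = (P * (1 - AL)) i j := by
    intro i j hj
    have := telescope_aux AL l hmem i j hj
    rw [hlen] at this
    exact this
  -- the key adjugate identity
  set ρS := (1 - M).adjugate 0 with hρdef
  have hρ : ρS = (P * (1 - AL)).adjugate 0 :=
    adjRow0_congr _ _ (fun i j hj => hcols i j hj)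
  have h0 : ρS ᵥ* (1 - M) = 0 := by
    have h2 := Matrix.adjugate_mul (1 - M)
    rw [hM, zero_smul] at h2
    rw [hρdef, ← row_mul_aux, h2]
    rfl
  have hrow : ρS ᵥ* P = P.det • ((1 - AL).adjugate 0) := by
    rw [hρ, Matrix.adjugate_mul_distrib, ← row_mul_aux, mul_assoc,
      Matrix.adjugate_mul]
    rw [Matrix.mul_smul, mul_one]
    rfl
  -- put it together
  have e1 : ρS ⬝ᵥ ((1 - M) *ᵥ x) = 0 := by
    rw [Matrix.dotProduct_mulVec, h0, zero_dotProduct]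
  rw [hfe, dotProduct_smul, Matrix.dotProduct_mulVec, hrow,
    smul_dotProduct] at e1
  have e2 : μ * ((wordP A S).det * (((1 - AL).adjugate 0) ⬝ᵥ b)) = 0 := by
    simpa [smul_eq_mul, mul_assoc] using e1
  rcases mul_eq_zero.mp e2 with h | h
  · exact hμ h
  · rcases mul_eq_zero.mp h with h | h
    · exact hP h
    · exact hrhob h
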